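/- The convolution of the kernel k₃(x,y) = exp(-2π i x y) on ℝ² with the Gaussian φ(x,y) = exp(-π(x²+y²)) equals (1/√2) exp(-π(x²+y²)/2 - iπ x y). In particular, k₃ * φ belongs to the Schwartz space S(ℝ²). -/

import Mathlib

open Real MeasureTheory Complex

set_option maxHeartbeats 1000000
open Real MeasureTheory Complex

lemma gauss_moment_bound {c : ℝ} (hc : 0 < c) (m : ℕ) :
    ∃ M : ℝ, ∀ t : ℝ, |t| ^ m * Real.exp (-(c * t ^ 2)) ≤ M := by
  refine ⟨Real.sqrt (((Nat.factorial m) : ℝ) * (2 / c) ^ m), fun t => ?_⟩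
  have h0 : 0 ≤ |t| ^ m * Real.exp (-(c * t ^ 2)) := by positivity
  rw [show |t| ^ m * Real.exp (-(c * t ^ 2))
      = Real.sqrt ((|t| ^ m * Real.exp (-(c * t ^ 2))) ^ 2) from (Real.sqrt_sq h0).symm]
  apply Real.sqrt_le_sqrt
  have hfact : (0:ℝ) < ((Nat.factorial m) : ℝ) := by positivity
  have h1 : (c * t ^ 2 / 2) ^ m / ((Nat.factorial m) : ℝ) ≤ Real.exp (c * t ^ 2 / 2) :=
    Real.pow_div_factorial_le_exp _ (by positivity) m
  have h2 : (t ^ 2) ^ m ≤ ((Nat.factorial m) : ℝ) * (2 / c) ^ m * Real.exp (c * t ^ 2 / 2) := by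
    have h3 : (c * t ^ 2 / 2) ^ m ≤ ((Nat.factorial m) : ℝ) * Real.exp (c * t ^ 2 / 2) := by
      rw [div_le_iff₀ hfact] at h1; linarith [h1]
    calc (t ^ 2) ^ m = (2 / c) ^ m * (c * t ^ 2 / 2) ^ m := by
          rw [← mul_pow]; congr 1; field_simp
      _ ≤ (2 / c) ^ m * (((Nat.factorial m) : ℝ) * Real.exp (c * t ^ 2 / 2)) := by
          apply mul_le_mul_of_nonneg_left h3 (by positivity)
      _ = ((Nat.factorial m) : ℝ) * (2 / c) ^ m * Real.exp (c * t ^ 2 / 2) := by ring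
  calc (|t| ^ m * Real.exp (-(c * t ^ 2))) ^ 2
      = (t ^ 2) ^ m * (Real.exp (-(c * t ^ 2)) ^ 2) := by
        rw [mul_pow, ← pow_mul, mul_comm m 2, pow_mul, _root_.sq_abs]
    _ ≤ (((Nat.factorial m) : ℝ) * (2 / c) ^ m * Real.exp (c * t ^ 2 / 2)) * (Real.exp (-(c * t ^ 2)) ^ 2) := by
        apply mul_le_mul_of_nonneg_right h2 (by positivity)
    _ = (((Nat.factorial m) : ℝ) * (2 / c) ^ m) * (Real.exp (c * t ^ 2 / 2) * Real.exp (-(c * t ^ 2)) ^ 2) := by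
        ring
    _ ≤ (((Nat.factorial m) : ℝ) * (2 / c) ^ m) * 1 := by
        apply mul_le_mul_of_nonneg_left _ (by positivity)
        rw [sq (Real.exp _), ← Real.exp_add, ← Real.exp_add, Real.exp_le_one_iff]
        nlinarith [sq_nonneg t]
    _ = _ := mul_one _

open scoped ContDiff

noncomputable def gaussPoly (b : ℂ) : ℕ → Polynomial ℂ
  | 0 => 1
  | n + 1 => (gaussPoly b n).derivative + gaussPoly b n * (Polynomial.C (-2 * b) * Polynomial.X)

lemma gauss_hasDerivAt (b : ℂ) (Q : Polynomial ℂ) (t : ℝ) :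
    HasDerivAt (fun s : ℝ => Q.eval (s : ℂ) * Complex.exp (-b * (s : ℂ) ^ 2))
      ((Q.derivative + Q * (Polynomial.C (-2 * b) * Polynomial.X)).eval (t : ℂ) *
        Complex.exp (-b * (t : ℂ) ^ 2)) t := by
  have h1 : HasDerivAt (fun s : ℝ => Q.eval (s : ℂ)) (Q.derivative.eval (t : ℂ)) t :=
    (Q.hasDerivAt (t : ℂ)).comp_ofReal
  have h2 : HasDerivAt (fun s : ℝ => Complex.exp (-b * (s : ℂ) ^ 2))
      (Complex.exp (-b * (t : ℂ) ^ 2) * (-b * (2 * (t : ℂ)))) t := by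
    have h3 : HasDerivAt (fun z : ℂ => Complex.exp (-b * z ^ 2))
        (Complex.exp (-b * (t : ℂ) ^ 2) * (-b * (2 * (t : ℂ) ^ 1))) (t : ℂ) :=
      ((hasDerivAt_pow 2 ((t : ℝ) : ℂ)).const_mul (-b)).cexp
    simpa using h3.comp_ofReal
  have h := h1.fun_mul h2
  refine h.congr_deriv ?_
  simp only [Polynomial.eval_add, Polynomial.eval_mul, Polynomial.eval_C, Polynomial.eval_X]
  ring

lemma gauss_iteratedDeriv (b : ℂ) : ∀ n : ℕ,
    iteratedDeriv n (fun t : ℝ => Complex.exp (-b * (t : ℂ) ^ 2)) =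
      fun t : ℝ => (gaussPoly b n).eval (t : ℂ) * Complex.exp (-b * (t : ℂ) ^ 2)
  | 0 => by
    funext t
    simp [gaussPoly]
  | n + 1 => by
    rw [iteratedDeriv_succ, gauss_iteratedDeriv b n]
    funext t
    rw [show gaussPoly b (n + 1)
      = (gaussPoly b n).derivative + gaussPoly b n * (Polynomial.C (-2 * b) * Polynomial.X) from rfl]
    exact (gauss_hasDerivAt b (gaussPoly b n) t).deriv

lemma gauss_contDiff (b : ℂ) : ContDiff ℝ ∞ (fun t : ℝ => Complex.exp (-b * (t : ℂ) ^ 2)) := by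
  apply Complex.contDiff_exp.comp
  exact contDiff_const.mul (Complex.ofRealCLM.contDiff.pow 2)

noncomputable def gauss1d (b : ℂ) (hb : 0 < b.re) : SchwartzMap ℝ ℂ where
  toFun := fun t : ℝ => Complex.exp (-b * (t : ℂ) ^ 2)
  smooth' := gauss_contDiff b
  decay' := by
    intro k n
    set Q := gaussPoly b n with hQ
    have hM : ∀ i : ℕ, ∃ M : ℝ, ∀ t : ℝ, |t| ^ (k + i) * Real.exp (-(b.re * t ^ 2)) ≤ M :=
      fun i => gauss_moment_bound hb (k + i)
    choose M hMle using hM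
    refine ⟨∑ i ∈ Finset.range (Q.natDegree + 1), ‖Q.coeff i‖ * M i, fun t => ?_⟩
    rw [norm_iteratedFDeriv_eq_norm_iteratedDeriv, gauss_iteratedDeriv b n]
    have hre : (-b * (t : ℂ) ^ 2).re = -(b.re * t ^ 2) := by
      simp [← Complex.ofReal_pow, Complex.mul_re]
    rw [norm_mul, show ‖Complex.exp (-b * (t : ℂ) ^ 2)‖ = Real.exp (-(b.re * t ^ 2)) by
      rw [Complex.norm_exp, hre]]
    have heval : ‖Q.eval (t : ℂ)‖ ≤ ∑ i ∈ Finset.range (Q.natDegree + 1), ‖Q.coeff i‖ * |t| ^ i := by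
      rw [Polynomial.eval_eq_sum_range]
      refine (norm_sum_le _ _).trans ?_
      apply Finset.sum_le_sum
      intro i _
      rw [norm_mul, norm_pow, Complex.norm_real, Real.norm_eq_abs]
    calc ‖t‖ ^ k * (‖Q.eval (t : ℂ)‖ * Real.exp (-(b.re * t ^ 2)))
        ≤ ‖t‖ ^ k * ((∑ i ∈ Finset.range (Q.natDegree + 1), ‖Q.coeff i‖ * |t| ^ i) *
            Real.exp (-(b.re * t ^ 2))) := by
          apply mul_le_mul_of_nonneg_left _ (by positivity)
          apply mul_le_mul_of_nonneg_right heval (by positivity)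
      _ = ∑ i ∈ Finset.range (Q.natDegree + 1),
            ‖Q.coeff i‖ * (|t| ^ (k + i) * Real.exp (-(b.re * t ^ 2))) := by
          rw [Finset.sum_mul, Finset.mul_sum]
          apply Finset.sum_congr rfl
          intro i _
          rw [pow_add, Real.norm_eq_abs]
          ring
      _ ≤ ∑ i ∈ Finset.range (Q.natDegree + 1), ‖Q.coeff i‖ * M i := by
          apply Finset.sum_le_sum
          intro i _
          exact mul_le_mul_of_nonneg_left (hMle i t) (norm_nonneg _)

@[simp] lemma gauss1d_apply (b : ℂ) (hb : 0 < b.re) (t : ℝ) :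
    gauss1d b hb t = Complex.exp (-b * (t : ℂ) ^ 2) := rfl
noncomputable def mulCompSchwartz (f₁ f₂ : SchwartzMap ℝ ℂ) : SchwartzMap (ℝ × ℝ) ℂ where
  toFun := fun p : ℝ × ℝ => f₁ (p.1 + p.2) * f₂ (p.1 - p.2)
  smooth' := (f₁.smooth'.comp (contDiff_fst.add contDiff_snd)).mul
      (f₂.smooth'.comp (contDiff_fst.sub contDiff_snd))
  decay' := by
    intro k n
    set L₁ : ℝ × ℝ →L[ℝ] ℝ :=
      ContinuousLinearMap.fst ℝ ℝ ℝ + ContinuousLinearMap.snd ℝ ℝ ℝ with hL₁def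
    set L₂ : ℝ × ℝ →L[ℝ] ℝ :=
      ContinuousLinearMap.fst ℝ ℝ ℝ - ContinuousLinearMap.snd ℝ ℝ ℝ with hL₂def
    have hL₁ : ∀ p : ℝ × ℝ, L₁ p = p.1 + p.2 := fun p => rfl
    have hL₂ : ∀ p : ℝ × ℝ, L₂ p = p.1 - p.2 := fun p => rfl
    have hL₁n : ‖L₁‖ ≤ 2 := by
      apply ContinuousLinearMap.opNorm_le_bound _ (by norm_num)
      intro p
      rw [hL₁, Real.norm_eq_abs]
      calc |p.1 + p.2| ≤ |p.1| + |p.2| := abs_add_le _ _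
        _ ≤ 2 * ‖p‖ := by
          rw [Prod.norm_def, Real.norm_eq_abs, Real.norm_eq_abs]
          have h1 := le_max_left |p.1| |p.2|
          have h2 := le_max_right |p.1| |p.2|
          linarith
    have hL₂n : ‖L₂‖ ≤ 2 := by
      apply ContinuousLinearMap.opNorm_le_bound _ (by norm_num)
      intro p
      rw [hL₂, Real.norm_eq_abs]
      calc |p.1 - p.2| ≤ |p.1| + |p.2| := abs_sub _ _
        _ ≤ 2 * ‖p‖ := by
          rw [Prod.norm_def, Real.norm_eq_abs, Real.norm_eq_abs]
          have h1 := le_max_left |p.1| |p.2|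
          have h2 := le_max_right |p.1| |p.2|
          linarith
    set S₁ : ℝ := 2 ^ k * (Finset.Iic (k, n)).sup (fun m => SchwartzMap.seminorm ℝ m.1 m.2) f₁
      with hS₁def
    set S₂ : ℝ := 2 ^ k * (Finset.Iic (k, n)).sup (fun m => SchwartzMap.seminorm ℝ m.1 m.2) f₂
      with hS₂def
    have hS₁ : 0 ≤ S₁ := mul_nonneg (by positivity) (apply_nonneg _ _)
    have hS₂ : 0 ≤ S₂ := mul_nonneg (by positivity) (apply_nonneg _ _)
    refine ⟨∑ i ∈ Finset.range (n + 1), (n.choose i : ℝ) * (2 ^ n * S₁) * (2 ^ n * S₂),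
      fun p => ?_⟩
    have hF : (fun p : ℝ × ℝ => f₁ (p.1 + p.2) * f₂ (p.1 - p.2))
        = fun p : ℝ × ℝ => (⇑f₁ ∘ ⇑L₁) p * (⇑f₂ ∘ ⇑L₂) p := rfl
    rw [hF]
    have hc₁ : ContDiff ℝ ∞ (⇑f₁ ∘ ⇑L₁) := f₁.smooth'.comp L₁.contDiff
    have hc₂ : ContDiff ℝ ∞ (⇑f₂ ∘ ⇑L₂) := f₂.smooth'.comp L₂.contDiff
    have hcomp₁ : ∀ (i : ℕ) (q : ℝ × ℝ), ‖iteratedFDeriv ℝ i (⇑f₁ ∘ ⇑L₁) q‖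
        ≤ ‖L₁‖ ^ i * ‖iteratedFDeriv ℝ i (⇑f₁) (L₁ q)‖ := by
      intro i q
      rw [L₁.iteratedFDeriv_comp_right (f₁.smooth ⊤) q (by exact_mod_cast le_top)]
      refine (ContinuousMultilinearMap.norm_compContinuousLinearMap_le _ _).trans ?_
      rw [Finset.prod_const, Finset.card_univ, Fintype.card_fin, mul_comm]
    have hcomp₂ : ∀ (i : ℕ) (q : ℝ × ℝ), ‖iteratedFDeriv ℝ i (⇑f₂ ∘ ⇑L₂) q‖
        ≤ ‖L₂‖ ^ i * ‖iteratedFDeriv ℝ i (⇑f₂) (L₂ q)‖ := by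
      intro i q
      rw [L₂.iteratedFDeriv_comp_right (f₂.smooth ⊤) q (by exact_mod_cast le_top)]
      refine (ContinuousMultilinearMap.norm_compContinuousLinearMap_le _ _).trans ?_
      rw [Finset.prod_const, Finset.card_univ, Fintype.card_fin, mul_comm]
    set a : ℝ := 1 + ‖L₁ p‖ with hadef
    set c : ℝ := 1 + ‖L₂ p‖ with hcdef
    have ha : (0:ℝ) < a := by positivity
    have hcc : (0:ℝ) < c := by positivity
    have h5 : ‖p‖ ≤ a * c := by
      rw [hadef, hcdef, hL₁, hL₂, Prod.norm_def, Real.norm_eq_abs, Real.norm_eq_abs,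
        Real.norm_eq_abs, Real.norm_eq_abs]
      have e1 : |p.1 + p.2 + (p.1 - p.2)| = 2 * |p.1| := by
        rw [show p.1 + p.2 + (p.1 - p.2) = 2 * p.1 by ring, abs_mul]; norm_num
      have e2 : |p.1 + p.2 - (p.1 - p.2)| = 2 * |p.2| := by
        rw [show p.1 + p.2 - (p.1 - p.2) = 2 * p.2 by ring, abs_mul]; norm_num
      have i1 := abs_add_le (p.1 + p.2) (p.1 - p.2)
      have i2 := abs_sub (p.1 + p.2) (p.1 - p.2)
      rw [e1] at i1
      rw [e2] at i2
      have j1 := abs_nonneg (p.1 + p.2)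
      have j2 := abs_nonneg (p.1 - p.2)
      apply max_le <;> nlinarith [mul_nonneg j1 j2]
    calc ‖p‖ ^ k * ‖iteratedFDeriv ℝ n (fun q : ℝ × ℝ => (⇑f₁ ∘ ⇑L₁) q * (⇑f₂ ∘ ⇑L₂) q) p‖
        ≤ (a * c) ^ k * ‖iteratedFDeriv ℝ n (fun q : ℝ × ℝ => (⇑f₁ ∘ ⇑L₁) q * (⇑f₂ ∘ ⇑L₂) q) p‖ :=
          mul_le_mul_of_nonneg_right (pow_le_pow_left₀ (norm_nonneg p) h5 k) (norm_nonneg _)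
      _ ≤ (a * c) ^ k * ∑ i ∈ Finset.range (n + 1), (n.choose i : ℝ) *
            ‖iteratedFDeriv ℝ i (⇑f₁ ∘ ⇑L₁) p‖ * ‖iteratedFDeriv ℝ (n - i) (⇑f₂ ∘ ⇑L₂) p‖ := by
          apply mul_le_mul_of_nonneg_left _ (by positivity)
          exact norm_iteratedFDeriv_mul_le hc₁ hc₂ p (by exact_mod_cast le_top)
      _ = ∑ i ∈ Finset.range (n + 1), (n.choose i : ℝ) *
            (a ^ k * ‖iteratedFDeriv ℝ i (⇑f₁ ∘ ⇑L₁) p‖) *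
            (c ^ k * ‖iteratedFDeriv ℝ (n - i) (⇑f₂ ∘ ⇑L₂) p‖) := by
          rw [Finset.mul_sum]
          apply Finset.sum_congr rfl
          intro i _
          rw [mul_pow]
          ring
      _ ≤ ∑ i ∈ Finset.range (n + 1), (n.choose i : ℝ) * (2 ^ n * S₁) * (2 ^ n * S₂) := by
          apply Finset.sum_le_sum
          intro i hi
          have hi' : i ≤ n := Nat.lt_succ_iff.mp (Finset.mem_range.mp hi)
          have e₁ : a ^ k * ‖iteratedFDeriv ℝ i (⇑f₁ ∘ ⇑L₁) p‖ ≤ 2 ^ n * S₁ := by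
            calc a ^ k * ‖iteratedFDeriv ℝ i (⇑f₁ ∘ ⇑L₁) p‖
                ≤ a ^ k * (‖L₁‖ ^ i * ‖iteratedFDeriv ℝ i (⇑f₁) (L₁ p)‖) :=
                  mul_le_mul_of_nonneg_left (hcomp₁ i p) (by positivity)
              _ = ‖L₁‖ ^ i * (a ^ k * ‖iteratedFDeriv ℝ i (⇑f₁) (L₁ p)‖) := by ring
              _ ≤ 2 ^ n * S₁ := by
                  apply mul_le_mul _ _ (by positivity) (by positivity)
                  · calc ‖L₁‖ ^ i ≤ 2 ^ i := pow_le_pow_left₀ (norm_nonneg _) hL₁n i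
                      _ ≤ 2 ^ n := pow_le_pow_right₀ (by norm_num) hi'
                  · exact SchwartzMap.one_add_le_sup_seminorm_apply (𝕜 := ℝ) (m := (k, n))
                      le_rfl hi' f₁ (L₁ p)
          have e₂ : c ^ k * ‖iteratedFDeriv ℝ (n - i) (⇑f₂ ∘ ⇑L₂) p‖ ≤ 2 ^ n * S₂ := by
            calc c ^ k * ‖iteratedFDeriv ℝ (n - i) (⇑f₂ ∘ ⇑L₂) p‖
                ≤ c ^ k * (‖L₂‖ ^ (n - i) * ‖iteratedFDeriv ℝ (n - i) (⇑f₂) (L₂ p)‖) :=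
                  mul_le_mul_of_nonneg_left (hcomp₂ (n - i) p) (by positivity)
              _ = ‖L₂‖ ^ (n - i) * (c ^ k * ‖iteratedFDeriv ℝ (n - i) (⇑f₂) (L₂ p)‖) := by ring
              _ ≤ 2 ^ n * S₂ := by
                  apply mul_le_mul _ _ (by positivity) (by positivity)
                  · calc ‖L₂‖ ^ (n - i) ≤ 2 ^ (n - i) := pow_le_pow_left₀ (norm_nonneg _) hL₂n _
                      _ ≤ 2 ^ n := pow_le_pow_right₀ (by norm_num) (Nat.sub_le n i)
                  · exact SchwartzMap.one_add_le_sup_seminorm_apply (𝕜 := ℝ) (m := (k, n))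
                      le_rfl (Nat.sub_le n i) f₂ (L₂ p)
          have hnn : (0:ℝ) ≤ (n.choose i : ℝ) := by positivity
          calc (n.choose i : ℝ) * (a ^ k * ‖iteratedFDeriv ℝ i (⇑f₁ ∘ ⇑L₁) p‖) *
                (c ^ k * ‖iteratedFDeriv ℝ (n - i) (⇑f₂ ∘ ⇑L₂) p‖)
              ≤ (n.choose i : ℝ) * (2 ^ n * S₁) *
                (c ^ k * ‖iteratedFDeriv ℝ (n - i) (⇑f₂ ∘ ⇑L₂) p‖) := by
                apply mul_le_mul_of_nonneg_right _ (by positivity)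
                exact mul_le_mul_of_nonneg_left e₁ hnn
            _ ≤ (n.choose i : ℝ) * (2 ^ n * S₁) * (2 ^ n * S₂) := by
                apply mul_le_mul_of_nonneg_left e₂
                exact mul_nonneg hnn (mul_nonneg (by positivity) hS₁)

@[simp] lemma mulCompSchwartz_apply (f₁ f₂ : SchwartzMap ℝ ℂ) (p : ℝ × ℝ) :
    mulCompSchwartz f₁ f₂ p = f₁ (p.1 + p.2) * f₂ (p.1 - p.2) := rfl
theorem fourier_kernel_smoothed (k₃ : ℝ → ℝ → ℂ)
    (hk₃ : ∀ x y : ℝ, k₃ x y = Complex.exp (-2 * π * Complex.I * x * y))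
    (φ : ℝ → ℝ → ℝ)
    (hφ : ∀ x y : ℝ, φ x y = Real.exp (-π * (x ^ 2 + y ^ 2))) :
    (∀ x y : ℝ,
      (∫ p : ℝ × ℝ, k₃ p.1 p.2 * (φ (x - p.1) (y - p.2) : ℂ))
        = (1 / Real.sqrt 2 : ℝ) *
            Complex.exp (-(π : ℂ) * ((x : ℂ) ^ 2 + (y : ℂ) ^ 2) / 2
              - Complex.I * π * x * y)) ∧
    ∃ g : SchwartzMap (ℝ × ℝ) ℂ, ∀ p : ℝ × ℝ,
      g p = ∫ q : ℝ × ℝ, k₃ q.1 q.2 * (φ (p.1 - q.1) (p.2 - q.2) : ℂ) := by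
  have hπ : (0:ℝ) < π := Real.pi_pos
  have hπc : (π:ℂ) ≠ 0 := Complex.ofReal_ne_zero.mpr (ne_of_gt hπ)
  have key : ∀ x y : ℝ,
      (∫ p : ℝ × ℝ, k₃ p.1 p.2 * (φ (x - p.1) (y - p.2) : ℂ))
        = (1 / Real.sqrt 2 : ℝ) *
            Complex.exp (-(π : ℂ) * ((x : ℂ) ^ 2 + (y : ℂ) ^ 2) / 2
              - Complex.I * π * x * y) := by
    intro x y
    have hrw : ∀ p : ℝ × ℝ, k₃ p.1 p.2 * (φ (x - p.1) (y - p.2) : ℂ)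
        = Complex.exp (-(π:ℂ) * (p.2:ℂ) ^ 2
            + (2 * (π:ℂ) * (y:ℂ) - 2 * (π:ℂ) * Complex.I * (p.1:ℂ)) * (p.2:ℂ)
            + (-(π:ℂ) * ((x:ℂ) - (p.1:ℂ)) ^ 2 - (π:ℂ) * (y:ℂ) ^ 2)) := by
      intro p
      rw [hk₃, hφ, Complex.ofReal_exp, ← Complex.exp_add]
      congr 1
      push_cast
      ring
    have hint : Integrable (fun p : ℝ × ℝ => Complex.exp (-(π:ℂ) * (p.2:ℂ) ^ 2
            + (2 * (π:ℂ) * (y:ℂ) - 2 * (π:ℂ) * Complex.I * (p.1:ℂ)) * (p.2:ℂ)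
            + (-(π:ℂ) * ((x:ℂ) - (p.1:ℂ)) ^ 2 - (π:ℂ) * (y:ℂ) ^ 2))) (volume : Measure (ℝ × ℝ)) := by
      apply MeasureTheory.Integrable.mono'
        (g := fun p : ℝ × ℝ => Real.exp (-π * (x - p.1) ^ 2) * Real.exp (-π * (y - p.2) ^ 2))
      · rw [MeasureTheory.Measure.volume_eq_prod ℝ ℝ]
        exact ((integrable_exp_neg_mul_sq hπ).comp_sub_left x).mul_prod
          ((integrable_exp_neg_mul_sq hπ).comp_sub_left y)
      · apply Continuous.aestronglyMeasurable
        fun_prop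
      · filter_upwards with p
        have hz : (-(π:ℂ) * (p.2:ℂ) ^ 2
            + (2 * (π:ℂ) * (y:ℂ) - 2 * (π:ℂ) * Complex.I * (p.1:ℂ)) * (p.2:ℂ)
            + (-(π:ℂ) * ((x:ℂ) - (p.1:ℂ)) ^ 2 - (π:ℂ) * (y:ℂ) ^ 2))
            = ((-π * (x - p.1) ^ 2 + -π * (y - p.2) ^ 2 : ℝ) : ℂ)
              + ((-2 * π * p.1 * p.2 : ℝ) : ℂ) * Complex.I := by
          push_cast
          ring
        rw [hz, Complex.norm_exp, ← Real.exp_add]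
        apply le_of_eq
        congr 1
        simp only [Complex.add_re, Complex.mul_re, Complex.ofReal_re, Complex.ofReal_im,
          Complex.I_re, Complex.I_im]
        ring
    simp_rw [hrw]
    rw [MeasureTheory.Measure.volume_eq_prod ℝ ℝ] at hint ⊢
    rw [MeasureTheory.integral_prod _ hint]
    have hb₁ : (-(π:ℂ)).re < 0 := by simpa using hπ
    have hinner : ∀ u : ℝ, (∫ v : ℝ, Complex.exp (-(π:ℂ) * (v:ℂ) ^ 2
            + (2 * (π:ℂ) * (y:ℂ) - 2 * (π:ℂ) * Complex.I * (u:ℂ)) * (v:ℂ)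
            + (-(π:ℂ) * ((x:ℂ) - (u:ℂ)) ^ 2 - (π:ℂ) * (y:ℂ) ^ 2)))
        = Complex.exp (-(2 * (π:ℂ)) * (u:ℂ) ^ 2
            + (2 * (π:ℂ) * (x:ℂ) - 2 * (π:ℂ) * Complex.I * (y:ℂ)) * (u:ℂ)
            + -(π:ℂ) * (x:ℂ) ^ 2) := by
      intro u
      rw [integral_cexp_quadratic hb₁]
      rw [show ((π:ℂ) / -(-(π:ℂ))) = 1 by rw [neg_neg]; exact div_self hπc, Complex.one_cpow,
        one_mul]
      congr 1
      field_simp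
      ring_nf
      simp only [Complex.I_sq]
      ring
    simp_rw [hinner]
    have hb₂ : (-(2 * (π:ℂ))).re < 0 := by
      simp only [neg_re, mul_re, ofReal_re, ofReal_im]
      norm_num [hπ]
    rw [integral_cexp_quadratic hb₂]
    have hconst : ((π:ℂ) / -(-(2 * (π:ℂ)))) ^ (1/2 : ℂ) = ((1 / Real.sqrt 2 : ℝ) : ℂ) := by
      rw [neg_neg]
      rw [show ((π:ℂ) / (2 * (π:ℂ))) = (((2:ℝ)⁻¹ : ℝ) : ℂ) by
        push_cast; field_simp]
      rw [show (1/2 : ℂ) = (((1/2 : ℝ) : ℝ) : ℂ) by norm_num]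
      rw [← Complex.ofReal_cpow (by norm_num : (0:ℝ) ≤ (2:ℝ)⁻¹)]
      congr 1
      rw [← Real.sqrt_eq_rpow, Real.sqrt_inv, one_div]
    rw [hconst]
    congr 1
    congr 1
    field_simp
    ring_nf
    simp only [Complex.I_sq]
    ring
  refine ⟨key, ?_⟩
  have hb1 : (0:ℝ) < ((π:ℂ) * (1 + Complex.I) / 4).re := by
    rw [show (π:ℂ) * (1 + Complex.I) / 4 = ((π/4 : ℝ):ℂ) + ((π/4 : ℝ):ℂ) * Complex.I by
      push_cast; ring]
    simp only [Complex.add_re, Complex.ofReal_re, Complex.mul_re, Complex.ofReal_im,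
      Complex.I_re, Complex.I_im]
    norm_num [hπ]
  have hb2 : (0:ℝ) < ((π:ℂ) * (1 - Complex.I) / 4).re := by
    rw [show (π:ℂ) * (1 - Complex.I) / 4 = ((π/4 : ℝ):ℂ) + ((-(π/4) : ℝ):ℂ) * Complex.I by
      push_cast; ring]
    simp only [Complex.add_re, Complex.ofReal_re, Complex.mul_re, Complex.ofReal_im,
      Complex.I_re, Complex.I_im]
    norm_num [hπ]
  refine ⟨((1 / Real.sqrt 2 : ℝ) : ℂ) • mulCompSchwartz (gauss1d _ hb1) (gauss1d _ hb2),
    fun p => ?_⟩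
  rw [key p.1 p.2]
  simp only [SchwartzMap.smul_apply, mulCompSchwartz_apply, gauss1d_apply, smul_eq_mul]
  rw [← Complex.exp_add]
  congr 1
  push_cast
  ring
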